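/- (Corollary 1, decay; case f = 0.) Set h̃_τ := [‖u(0)‖ + ∫_0^τ α(ξ)·ν(ξ)·‖u(ξ−τ)‖^p dξ]/ν(τ) and assume h̃_τ > 0. Assume the improper integral I := ∫_τ^∞ α(ξ)·σ(ξ)^p·ν(ξ)^{1−p} dξ converges, (h̃_τ·ν(τ))^{1−p} > (p−1)·I, and lim_{t→∞} ∫_0^t γ(ξ) dξ = −∞. Then lim_{t→∞} ‖u(t)‖ = 0. -/

import Mathlib

open Real MeasureTheory Set Filter ComplexInnerProductSpace

/-- `ν(t) = exp(−∫₀ᵗ γ(ξ) dξ)`. -/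
noncomputable def nu (γ : ℝ → ℝ) (t : ℝ) : ℝ := Real.exp (-∫ ξ in (0:ℝ)..t, γ ξ)

/-- `σ(t) = exp(−∫_{t−τ}^t γ(ξ) dξ)`. -/
noncomputable def sig (γ : ℝ → ℝ) (τ t : ℝ) : ℝ :=
  Real.exp (-∫ ξ in (t - τ)..t, γ ξ)

lemma exp_rpow_aux (x y : ℝ) : Real.exp x ^ y = Real.exp (x * y) := by
  rw [Real.rpow_def_of_pos (Real.exp_pos x), Real.log_exp]

set_option maxHeartbeats 1000000 in
/-- Corollary 2.8 (Corollary 1), decay for the case `f = 0`: if moreover `∫₀ᵗ γ → −∞` as `t → ∞`, then `‖u(t)‖ → 0`. -/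
theorem stmt_17
    {H : Type*} [NormedAddCommGroup H] [InnerProductSpace ℂ H]
    (τ p : ℝ) (hτ : 0 < τ) (hp : 1 < p)
    (γ α : ℝ → ℝ)
    (hγc : Continuous γ) (hαc : Continuous α)
    (hα : ∀ t, 0 ≤ α t)
    (u : ℝ → H) (u' : ℝ → H)
    (huc : ContinuousOn u (Ici (-τ)))
    (hud : ∀ t, 0 ≤ t → HasDerivWithinAt u (u' t) (Ici (0:ℝ)) t)
    (hnd : ∀ t, 0 ≤ t → DifferentiableWithinAt ℝ (fun s => ‖u s‖) (Ici (0:ℝ)) t)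
    (huineq : ∀ t, 0 ≤ t → (⟪u t, u' t⟫).re ≤
      γ t * ‖u t‖ ^ 2 + α t * ‖u t‖ * ‖u (t - τ)‖ ^ p)
    (h h' : ℝ → ℝ)
    (hh0 : ∀ t, -τ ≤ t → 0 ≤ h t)
    (hhc : ContinuousOn h (Ici (-τ)))
    (hhd : ∀ t, 0 ≤ t → HasDerivWithinAt h (h' t) (Ici (0:ℝ)) t)
    (hheq : ∀ t, 0 ≤ t → h' t = γ t * h t + α t * h (t - τ) ^ p)
    (hinit : ∀ t, -τ ≤ t → t ≤ 0 → h t = ‖u t‖)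
    (hτv : ℝ)
    (hτvdef : hτv = (‖u 0‖ + ∫ ξ in (0:ℝ)..τ,
        α ξ * nu γ ξ * ‖u (ξ - τ)‖ ^ p) / nu γ τ)
    (hτvpos : 0 < hτv)
    (I : ℝ)
    (hint : IntegrableOn (fun ξ => α ξ * sig γ τ ξ ^ p * nu γ ξ ^ (1 - p)) (Ici τ))
    (hI : I = ∫ ξ in Ici τ, α ξ * sig γ τ ξ ^ p * nu γ ξ ^ (1 - p))
    (hcond : (p - 1) * I < (hτv * nu γ τ) ^ (1 - p))
    (hγlim : Tendsto (fun t => ∫ ξ in (0:ℝ)..t, γ ξ) atTop atBot) :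
    Tendsto (fun t => ‖u t‖) atTop (nhds 0) := by
  have hp0 : (0:ℝ) < p := lt_trans one_pos hp
  -- basic facts about FF and nu
  set FF : ℝ → ℝ := fun t => ∫ ξ in (0:ℝ)..t, γ ξ with hFFdef
  have hFF : ∀ t, HasDerivAt FF (γ t) t := fun t =>
    (intervalIntegral.integral_hasStrictDerivAt_right (hγc.intervalIntegrable _ _)
      (hγc.stronglyMeasurableAtFilter _ _) hγc.continuousAt).hasDerivAt
  have hFFc : Continuous FF := by
    have : Differentiable ℝ FF := fun t => (hFF t).differentiableAt
    exact this.continuous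
  have hνeq : ∀ t, nu γ t = Real.exp (-FF t) := fun t => rfl
  have hνpos : ∀ t, 0 < nu γ t := fun t => Real.exp_pos _
  have hνd : ∀ t, HasDerivAt (nu γ) (-γ t * nu γ t) t := by
    intro t
    have := ((hFF t).neg).exp
    rw [show nu γ = fun x => Real.exp (-FF x) from rfl]
    simpa [hνeq, mul_comm] using this
  have hνc : Continuous (nu γ) := Real.continuous_exp.comp hFFc.neg
  have hσpos : ∀ t, 0 < sig γ τ t := fun t => Real.exp_pos _
  have hσc : Continuous (sig γ τ) := by
    have : (fun t => sig γ τ t) = fun t => Real.exp (-(FF t - FF (t - τ))) := by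
      funext t
      have hadd : (∫ ξ in (0:ℝ)..(t-τ), γ ξ) + (∫ ξ in (t-τ)..t, γ ξ) = ∫ ξ in (0:ℝ)..t, γ ξ :=
        intervalIntegral.integral_add_adjacent_intervals (hγc.intervalIntegrable _ _)
          (hγc.intervalIntegrable _ _)
      simp only [sig, hFFdef]
      congr 1
      linarith [hadd]
    rw [show sig γ τ = fun t => sig γ τ t from rfl, this]
    exact Real.continuous_exp.comp (hFFc.sub (hFFc.comp (continuous_id.sub continuous_const))).neg
  have hνshift : ∀ t, nu γ (t - τ) = nu γ t / sig γ τ t := by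
    intro t
    have hadd : (∫ ξ in (0:ℝ)..(t-τ), γ ξ) + (∫ ξ in (t-τ)..t, γ ξ) = ∫ ξ in (0:ℝ)..t, γ ξ :=
      intervalIntegral.integral_add_adjacent_intervals (hγc.intervalIntegrable _ _)
        (hγc.intervalIntegrable _ _)
    simp only [nu, sig]
    rw [← Real.exp_sub]
    congr 1
    linarith [hadd]
  -- the norm function and its derivative
  set g : ℝ → ℝ := fun t => ‖u t‖ with hgdef
  set g' : ℝ → ℝ := fun t => derivWithin g (Ici (0:ℝ)) t with hg'def
  have hgc : ContinuousOn g (Ici (-τ)) := huc.norm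
  have hgnn : ∀ t, 0 ≤ g t := fun t => norm_nonneg _
  have hgd : ∀ t, 0 ≤ t → HasDerivWithinAt g (g' t) (Ici (0:ℝ)) t := fun t ht =>
    (hnd t ht).hasDerivWithinAt
  -- key differential inequality for g where g > 0
  have hgineq : ∀ t, 0 ≤ t → g t * g' t ≤ γ t * g t ^ 2 + α t * g t * g (t - τ) ^ p := by
    intro t ht
    have h1 : HasDerivWithinAt (fun s => g s * g s) (g' t * g t + g t * g' t) (Ici (0:ℝ)) t :=
      (hgd t ht).mul (hgd t ht)
    have h2 : HasDerivWithinAt (fun s => (⟪u s, u s⟫).re)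
        ((⟪u t, u' t⟫ + ⟪u' t, u t⟫).re) (Ici (0:ℝ)) t := by
      have := ((hud t ht).inner ℂ (hud t ht))
      exact (Complex.reCLM.hasFDerivAt.comp_hasDerivWithinAt t this)
    have heqf : (fun s => (⟪u s, u s⟫).re) = fun s => g s * g s := by
      funext s
      have : (⟪u s, u s⟫).re = ‖u s‖ ^ 2 := by
        simpa using inner_self_eq_norm_sq (𝕜 := ℂ) (u s)
      simp [hgdef, this, sq]
    rw [heqf] at h2
    have huniq : g' t * g t + g t * g' t = (⟪u t, u' t⟫ + ⟪u' t, u t⟫).re := by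
      have hud' : UniqueDiffWithinAt ℝ (Ici (0:ℝ)) t := uniqueDiffOn_Ici 0 t ht
      exact (h1.derivWithin hud').symm.trans (h2.derivWithin hud')
    have hre : (⟪u t, u' t⟫ + ⟪u' t, u t⟫).re = 2 * (⟪u t, u' t⟫).re := by
      have hconj : (⟪u' t, u t⟫ : ℂ) = (starRingEnd ℂ) ⟪u t, u' t⟫ :=
        (inner_conj_symm (u' t) (u t)).symm
      rw [hconj, Complex.add_re, Complex.conj_re]
      ring
    have := huineq t ht
    nlinarith [huniq, hre]
  -- Part A : comparison g ≤ h
  have hstep : ∀ a : ℝ, 0 ≤ a → (∀ s, -τ ≤ s → s ≤ a → g s ≤ h s) →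
      ∀ t ∈ Icc a (a + τ), g t ≤ h t := by
    intro a ha0 IH t htmem
    obtain ⟨K, hK⟩ := (isCompact_Icc (a := a) (b := a + τ)).exists_bound_of_continuousOn
      hγc.continuousOn
    set L : ℝ := K + 1 with hLdef
    have hγL : ∀ x ∈ Icc a (a + τ), γ x < L := by
      intro x hx
      have := hK x hx
      have : γ x ≤ K := le_trans (le_abs_self _) this
      linarith
    have hIccsub : Icc a (a + τ) ⊆ Ici (-τ) := fun x hx => le_trans (by linarith) hx.1
    have main : ∀ ε : ℝ, 0 < ε → g t ≤ h t + ε * Real.exp (L * (t - a)) := by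
      intro ε hε
      set B : ℝ → ℝ := fun s => h s + ε * Real.exp (L * (s - a)) with hBdef
      set B' : ℝ → ℝ := fun s => h' s + ε * (L * Real.exp (L * (s - a))) with hB'def
      have hexp : ∀ x : ℝ, HasDerivAt (fun s => ε * Real.exp (L * (s - a)))
          (ε * (L * Real.exp (L * (x - a)))) x := by
        intro x
        have h1 : HasDerivAt (fun s : ℝ => L * (s - a)) L x := by
          simpa using ((hasDerivAt_id x).sub_const a).const_mul L
        have := (h1.exp).const_mul ε
        simpa [mul_comm] using this
      have key := image_le_of_deriv_right_lt_deriv_boundary'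
        (f := g) (f' := g') (a := a) (b := a + τ)
        (hgc.mono hIccsub)
        (fun x hx => (hgd x (le_trans ha0 hx.1)).mono (Ici_subset_Ici.2 (le_trans ha0 hx.1)))
        (B := B) (B' := B')
        (by
          have hga : g a ≤ h a := IH a (le_trans (by linarith) ha0) le_rfl
          have : (0:ℝ) < ε * Real.exp (L * (a - a)) := by positivity
          simp only [hBdef]
          linarith)
        ((hhc.mono (fun x hx => le_trans (neg_nonpos_of_nonneg hτ.le) (le_trans ha0 hx.1))).add
          (Continuous.continuousOn (continuous_const.mul (Real.continuous_exp.comp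
            (continuous_const.mul (continuous_id.sub continuous_const))))))
        (fun x hx => ((hhd x (le_trans ha0 hx.1)).mono
            (Ici_subset_Ici.2 (le_trans ha0 hx.1))).add ((hexp x).hasDerivWithinAt))
        ?_ htmem
      · exact key
      · -- the barrier bound
        intro x hx hgB
        have hx0 : 0 ≤ x := le_trans ha0 hx.1
        have hepos : (0:ℝ) < ε * Real.exp (L * (x - a)) := by positivity
        have hhx : 0 ≤ h x := hh0 x (le_trans (neg_nonpos_of_nonneg hτ.le) hx0)
        have hgxpos : 0 < g x := by
          rw [hgB]; simp only [hBdef]; linarith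
        have hshift : g (x - τ) ≤ h (x - τ) := by
          apply IH
          · linarith
          · have := hx.2; linarith
        have hrp : g (x - τ) ^ p ≤ h (x - τ) ^ p :=
          Real.rpow_le_rpow (hgnn _) hshift hp0.le
        have h1 := hgineq x hx0
        have h2 : g x * g' x ≤ g x * (γ x * g x + α x * h (x - τ) ^ p) := by
          have : α x * g x * g (x - τ) ^ p ≤ α x * g x * h (x - τ) ^ p := by
            exact mul_le_mul_of_nonneg_left hrp (mul_nonneg (hα x) (hgnn x))
          nlinarith [h1]
        have h3 : g' x ≤ γ x * g x + α x * h (x - τ) ^ p :=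
          le_of_mul_le_mul_left (by linarith [h2]) hgxpos
        have h4 : γ x * g x = γ x * h x + γ x * (ε * Real.exp (L * (x - a))) := by
          rw [hgB]; simp only [hBdef]; ring
        have h5 : γ x * (ε * Real.exp (L * (x - a))) < L * (ε * Real.exp (L * (x - a))) := by
          apply mul_lt_mul_of_pos_right _ hepos
          exact hγL x ⟨hx.1, hx.2.le⟩
        have h6 := hheq x hx0
        simp only [hB'def]
        nlinarith [h3, h4, h5]
    -- let ε → 0
    have : ∀ ε : ℝ, 0 < ε → g t ≤ h t + ε := by
      intro ε hε
      have he : (0:ℝ) < Real.exp (L * (t - a)) := Real.exp_pos _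
      have := main (ε / Real.exp (L * (t - a))) (by positivity)
      rwa [div_mul_cancel₀ _ (ne_of_gt he)] at this
    exact le_of_forall_pos_le_add this
  have hcomp : ∀ t, -τ ≤ t → g t ≤ h t := by
    have hn : ∀ n : ℕ, ∀ t, -τ ≤ t → t ≤ n * τ → g t ≤ h t := by
      intro n
      induction n with
      | zero =>
        intro t ht1 ht2
        simp only [Nat.cast_zero, zero_mul] at ht2
        exact le_of_eq (hinit t ht1 ht2).symm
      | succ n IH =>
        intro t ht1 ht2
        rcases le_or_gt t (n * τ) with hc | hc
        · exact IH t ht1 hc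
        · have hn0 : (0:ℝ) ≤ n * τ := by positivity
          refine hstep (n * τ) hn0 IH t ⟨hc.le, ?_⟩
          push_cast at ht2
          linarith
    intro t ht
    obtain ⟨n, hn'⟩ := exists_nat_ge (t / τ)
    refine hn n t ht ?_
    calc t = t / τ * τ := by field_simp
    _ ≤ n * τ := by apply mul_le_mul_of_nonneg_right hn' hτ.le
  -- Part B : bound on w = h * nu
  set w : ℝ → ℝ := fun t => h t * nu γ t with hwdef
  set w' : ℝ → ℝ := fun t => α t * nu γ t * h (t - τ) ^ p with hw'def
  have hwd : ∀ t, 0 ≤ t → HasDerivWithinAt w (w' t) (Ici (0:ℝ)) t := by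
    intro t ht
    have := (hhd t ht).mul ((hνd t).hasDerivWithinAt)
    have heq : h' t * nu γ t + h t * (-γ t * nu γ t) = w' t := by
      rw [hheq t ht]; simp only [hw'def]; ring
    rw [← heq]
    exact this
  have hw'nn : ∀ t, 0 ≤ t → 0 ≤ w' t := by
    intro t ht
    exact mul_nonneg (mul_nonneg (hα t) (hνpos t).le)
      (Real.rpow_nonneg (hh0 _ (by linarith)) p)
  have hIci : Ici (0:ℝ) ⊆ Ici (-τ) := Ici_subset_Ici.2 (by linarith)
  have hwc : ContinuousOn w (Ici (0:ℝ)) := ((hhc.mono hIci).mul (hνc.continuousOn))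
  have hwmono : MonotoneOn w (Ici (0:ℝ)) := by
    apply monotoneOn_of_deriv_nonneg (convex_Ici 0) hwc
    · intro x hx
      rw [interior_Ici] at hx
      exact (((hwd x (le_of_lt hx)).hasDerivAt (Ici_mem_nhds hx)).differentiableAt).differentiableWithinAt
    · intro x hx
      rw [interior_Ici] at hx
      rw [((hwd x (le_of_lt hx)).hasDerivAt (Ici_mem_nhds hx)).deriv]
      exact hw'nn x (le_of_lt hx)
  have hw0 : w 0 = ‖u 0‖ := by
    simp only [hwdef, nu]
    rw [intervalIntegral.integral_same, hinit 0 (by linarith) le_rfl]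
    simp
  have hwτ : w τ = hτv * nu γ τ := by
    have hshiftc : ContinuousOn (fun s => h (s - τ)) (Icc 0 τ) := by
      apply hhc.comp (continuousOn_id.sub continuousOn_const)
      intro x hx
      simp only [mem_Ici]
      have := hx.1
      simp only [Pi.sub_apply, id]
      linarith
    have hw'c : ContinuousOn w' (Icc 0 τ) := by
      apply ContinuousOn.mul
      · exact (hαc.continuousOn.mul hνc.continuousOn)
      · exact hshiftc.rpow_const (fun x _ => Or.inr hp0.le)
    have hFTC : (∫ s in (0:ℝ)..τ, w' s) = w τ - w 0 := by
      apply intervalIntegral.integral_eq_sub_of_hasDeriv_right_of_le hτ.le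
        (hwc.mono (fun x hx => hx.1))
        (fun x hx => (hwd x hx.1.le).mono (fun y hy => le_trans hx.1.le (le_of_lt hy)))
      exact (hw'c.mono (by rw [uIcc_of_le hτ.le])).intervalIntegrable
    have hintegrand : (∫ s in (0:ℝ)..τ, w' s)
        = ∫ s in (0:ℝ)..τ, α s * nu γ s * ‖u (s - τ)‖ ^ p := by
      apply intervalIntegral.integral_congr
      intro s hs
      rw [uIcc_of_le hτ.le] at hs
      simp only [hw'def]
      rw [hinit (s - τ) (by linarith [hs.1]) (by linarith [hs.2])]
    have hντ := hνpos τ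
    have : hτv * nu γ τ = ‖u 0‖ + ∫ ξ in (0:ℝ)..τ, α ξ * nu γ ξ * ‖u (ξ - τ)‖ ^ p := by
      rw [hτvdef]
      field_simp
    rw [this, ← hintegrand, hFTC, hw0]
    ring
  have hwτpos : 0 < w τ := by rw [hwτ]; exact mul_pos hτvpos (hνpos τ)
  have hwpos : ∀ t, τ ≤ t → 0 < w t := fun t ht =>
    lt_of_lt_of_le hwτpos (hwmono (mem_Ici.2 hτ.le) (mem_Ici.2 (le_trans hτ.le ht)) ht)
  -- the function F
  set F : ℝ → ℝ := fun ξ => α ξ * sig γ τ ξ ^ p * nu γ ξ ^ (1 - p) with hFdef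
  have hFnn : ∀ ξ, 0 ≤ F ξ := by
    intro ξ
    have h1 := (hσpos ξ).le
    have h2 := (hνpos ξ).le
    have := hα ξ
    simp only [hFdef]
    positivity
  have hFc : Continuous F := by
    apply Continuous.mul
    · apply Continuous.mul hαc
      exact (hσc.rpow_const (fun x => Or.inl (ne_of_gt (hσpos x))))
    · exact (hνc.rpow_const (fun x => Or.inl (ne_of_gt (hνpos x))))
  -- key inequality : w x ^ (-p) * w' x ≤ F x for x ≥ τ
  have hkey : ∀ x, τ ≤ x → w x ^ (-p) * w' x ≤ F x := by
    intro x hx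
    have hx0 : 0 ≤ x := le_trans hτ.le hx
    have hwx := hwpos x hx
    have hwshift : w (x - τ) ≤ w x := hwmono (mem_Ici.2 (by linarith)) (mem_Ici.2 hx0) (by linarith)
    have hwshiftnn : 0 ≤ w (x - τ) := by
      simp only [hwdef]
      exact mul_nonneg (hh0 _ (by linarith)) (hνpos _).le
    have hνx := hνpos x
    have hνxτ := hνpos (x - τ)
    have hhx : h (x - τ) = w (x - τ) / nu γ (x - τ) := by
      show h (x - τ) = h (x - τ) * nu γ (x - τ) / nu γ (x - τ)
      rw [mul_div_cancel_right₀ _ (ne_of_gt hνxτ)]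
    have hstep1 : w x ^ (-p) * w' x
        = α x * nu γ x * (w (x - τ) / nu γ (x - τ)) ^ p * w x ^ (-p) := by
      simp only [hw'def]
      rw [hhx]; ring
    rw [hstep1]
    have hratio : (w (x - τ) / nu γ (x - τ)) ^ p ≤ (w x / nu γ (x - τ)) ^ p :=
      Real.rpow_le_rpow (div_nonneg hwshiftnn hνxτ.le)
        ((div_le_div_iff_of_pos_right hνxτ).2 hwshift) hp0.le
    have hmul : α x * nu γ x * (w (x - τ) / nu γ (x - τ)) ^ p * w x ^ (-p)
        ≤ α x * nu γ x * (w x / nu γ (x - τ)) ^ p * w x ^ (-p) := by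
      have h1 : 0 ≤ α x * nu γ x := mul_nonneg (hα x) hνx.le
      have h2 : 0 ≤ w x ^ (-p) := (Real.rpow_pos_of_pos hwx _).le
      exact mul_le_mul_of_nonneg_right (mul_le_mul_of_nonneg_left hratio h1) h2
    refine le_trans hmul (le_of_eq ?_)
    -- now an identity in positive reals
    have hne1 : w x ^ p ≠ 0 := (Real.rpow_pos_of_pos hwx p).ne'
    have hne2 : nu γ x ^ p ≠ 0 := (Real.rpow_pos_of_pos hνx p).ne'
    have hne3 : sig γ τ x ^ p ≠ 0 := (Real.rpow_pos_of_pos (hσpos x) p).ne'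
    simp only [hFdef]
    rw [hνshift x, div_div_eq_mul_div, Real.div_rpow (mul_nonneg hwx.le (hσpos x).le) hνx.le,
      Real.mul_rpow hwx.le (hσpos x).le, Real.rpow_neg hwx.le,
      show (1:ℝ) - p = 1 + (-p) by ring, Real.rpow_add hνx, Real.rpow_one,
      Real.rpow_neg hνx.le]
    field_simp
  -- Part C : Bihari estimate and conclusion
  set z : ℝ → ℝ := fun t => w t ^ (1 - p) with hzdef
  set G : ℝ → ℝ := fun t => ∫ ξ in τ..t, F ξ with hGdef
  have hGd : ∀ t, HasDerivAt G (F t) t := fun t =>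
    (intervalIntegral.integral_hasStrictDerivAt_right (hFc.intervalIntegrable _ _)
      (hFc.stronglyMeasurableAtFilter _ _) hFc.continuousAt).hasDerivAt
  set Φ : ℝ → ℝ := fun t => z t + (p - 1) * G t with hΦdef
  have hsub0 : Ici τ ⊆ Ici (0:ℝ) := Ici_subset_Ici.2 hτ.le
  have hzd : ∀ t, τ ≤ t →
      HasDerivWithinAt z (w' t * (1 - p) * w t ^ (1 - p - 1)) (Ici τ) t := by
    intro t ht
    exact ((hwd t (le_trans hτ.le ht)).mono hsub0).rpow_const (Or.inl (hwpos t ht).ne')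
  have hΦd : ∀ t, τ ≤ t → HasDerivWithinAt Φ
      (w' t * (1 - p) * w t ^ (1 - p - 1) + (p - 1) * F t) (Ici τ) t := by
    intro t ht
    exact (hzd t ht).add (((hGd t).hasDerivWithinAt).const_mul (p - 1))
  have hΦderiv_nonneg : ∀ t, τ ≤ t →
      0 ≤ w' t * (1 - p) * w t ^ (1 - p - 1) + (p - 1) * F t := by
    intro t ht
    have hk := hkey t ht
    have hexp : (1:ℝ) - p - 1 = -p := by ring
    rw [hexp]
    have hw'0 : 0 ≤ w' t := hw'nn t (le_trans hτ.le ht)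
    have hwp : 0 ≤ w t ^ (-p) := (Real.rpow_pos_of_pos (hwpos t ht) _).le
    nlinarith [hk]
  have hΦmono : MonotoneOn Φ (Ici τ) := by
    apply monotoneOn_of_deriv_nonneg (convex_Ici τ)
    · apply ContinuousOn.add
      · exact ((hwc.mono hsub0).rpow_const (fun x hx => Or.inl (hwpos x hx).ne'))
      · exact (continuousOn_const.mul (fun x _ => ((hGd x).continuousAt).continuousWithinAt))
    · intro x hx
      rw [interior_Ici] at hx
      exact (((hΦd x hx.le).hasDerivAt (Ici_mem_nhds hx)).differentiableAt).differentiableWithinAt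
    · intro x hx
      rw [interior_Ici] at hx
      rw [((hΦd x hx.le).hasDerivAt (Ici_mem_nhds hx)).deriv]
      exact hΦderiv_nonneg x hx.le
  have hGτ : G τ = 0 := intervalIntegral.integral_same
  have hΦineq : ∀ t, τ ≤ t → z τ ≤ z t + (p - 1) * G t := by
    intro t ht
    have := hΦmono (mem_Ici.2 le_rfl) (mem_Ici.2 ht) ht
    simp only [hΦdef, hGτ, mul_zero, add_zero] at this
    exact this
  have hGle : ∀ t, τ ≤ t → G t ≤ I := by
    intro t ht
    simp only [hGdef]
    rw [intervalIntegral.integral_of_le ht, hI]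
    exact setIntegral_mono_set hint (Filter.Eventually.of_forall hFnn)
      (HasSubset.Subset.eventuallyLE (fun y hy => le_of_lt hy.1))
  have hzτ : z τ = (hτv * nu γ τ) ^ (1 - p) := by
    simp only [hzdef]; rw [hwτ]
  set c : ℝ := (hτv * nu γ τ) ^ (1 - p) - (p - 1) * I with hcdef
  have hcpos : 0 < c := by simp only [hcdef]; linarith [hcond]
  have hzlb : ∀ t, τ ≤ t → c ≤ z t := by
    intro t ht
    have h1 := hΦineq t ht
    have h2 : (p - 1) * G t ≤ (p - 1) * I :=
      mul_le_mul_of_nonneg_left (hGle t ht) (by linarith)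
    rw [hzτ] at h1
    simp only [hcdef]
    linarith
  set M : ℝ := c ^ (1 - p)⁻¹ with hMdef
  have hwub : ∀ t, τ ≤ t → w t ≤ M := by
    intro t ht
    have hwt := hwpos t ht
    have h1 : z t ^ (1 - p)⁻¹ ≤ c ^ (1 - p)⁻¹ :=
      Real.rpow_le_rpow_of_nonpos hcpos (hzlb t ht) (inv_nonpos.2 (by linarith))
    have h2 : z t ^ (1 - p)⁻¹ = w t := by
      simp only [hzdef]
      rw [← Real.rpow_mul hwt.le, mul_inv_cancel₀ (by intro hc0; rw [sub_eq_zero] at hc0; linarith),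
        Real.rpow_one]
    simp only [hMdef]
    linarith
  have hub : ∀ t, τ ≤ t → g t ≤ M * Real.exp (FF t) := by
    intro t ht
    have h1 : g t ≤ h t := hcomp t (by linarith)
    have h2 : h t = w t / nu γ t := by
      show h t = h t * nu γ t / nu γ t
      rw [mul_div_cancel_right₀ _ (hνpos t).ne']
    have h3 : w t / nu γ t ≤ M / nu γ t := (div_le_div_iff_of_pos_right (hνpos t)).2 (hwub t ht)
    have h4 : M / nu γ t = M * Real.exp (FF t) := by
      rw [hνeq, Real.exp_neg]
      field_simp
    linarith
  have hexp0 : Tendsto (fun t => M * Real.exp (FF t)) atTop (nhds 0) := by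
    have h1 : Tendsto (fun t => Real.exp (FF t)) atTop (nhds 0) :=
      Real.tendsto_exp_atBot.comp hγlim
    have := h1.const_mul M
    simpa using this
  apply squeeze_zero' (Filter.Eventually.of_forall (fun t => hgnn t))
    ((eventually_ge_atTop τ).mono (fun t ht => hub t ht)) hexp0
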